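/- Let N ≥ 1 and m ≥ 1. For each i ∈ Fin m let uᵢ, vᵢ : ℝ → EuclideanSpace ℂ (Fin N) be continuous with ‖uᵢ(t)‖ ≤ B and ‖vᵢ(t)‖ ≤ B' for all t (B, B' ≥ 0), and let μᵢ ∈ ℂ be such that μ₀ = 0 and Re μᵢ < 0 for all i ≠ 0. Let b : ℝ → EuclideanSpace ℂ (Fin N) be continuous with ‖b(τ)‖ ≤ ε for all τ (ε ≥ 0), and suppose the orthogonality condition ⟪v₀(τ), b(τ)⟫ = 0 holds for all τ. Fix t₀ ∈ ℝ. Then the Floquet-form response x(t) := Σ_{i ∈ Fin m} (∫_{t₀}^{t} exp(μᵢ·(t−τ)) · ⟪vᵢ(τ), b(τ)⟫ dτ) • uᵢ(t) satisfies, for all t ≥ t₀, ‖x(t)‖ ≤ ε·B·B'·Σ_{i ≠ 0} 1/(−Re μᵢ). In particular x remains bounded for all t ≥ t₀, with bound proportional to ε. (This is the key quantitative step of the hierarchical PPV theorem: when the time shift α is chosen so that the residual input is orthogonal to v₁ — i.e., α satisfies the hierarchical PPV equation dα/dt = v₁ᵀ(t+α(t))·b_φ(φ*(t+α(t)), t)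 — the orbital deviation δφ of the synchronized group of coupled oscillators from the time-shifted locked orbit φ*(t+α(t)) remains bounded and small for all time, so the group behaves as a single effective oscillator with effective PPV v₁.) -/

import Mathlib

open scoped BigOperators

lemma exp_int_bound (r : ℝ) (hr : r < 0) (t₀ t : ℝ) (ht : t₀ ≤ t) :
    ∫ τ in t₀..t, Real.exp (r * (t - τ)) ≤ 1 / (-r) := by
  have hF : ∀ τ : ℝ, HasDerivAt (fun τ => Real.exp (r * (t - τ)) / (-r))
      (Real.exp (r * (t - τ))) τ := by
    intro τ
    have h1 : HasDerivAt (fun τ : ℝ => r * (t - τ)) (-r) τ := by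
      simpa using ((hasDerivAt_id τ).const_sub t).const_mul r
    have h3 := h1.exp.div_const (-r)
    have h4 : Real.exp (r * (t - τ)) * -r / -r = Real.exp (r * (t - τ)) :=
      mul_div_cancel_right₀ _ (neg_ne_zero.mpr hr.ne)
    rw [h4] at h3
    exact h3
  have hcont : Continuous fun τ : ℝ => Real.exp (r * (t - τ)) :=
    Real.continuous_exp.comp (continuous_const.mul (continuous_const.sub continuous_id))
  have hint : ∫ τ in t₀..t, Real.exp (r * (t - τ)) =
      Real.exp (r * (t - t)) / (-r) - Real.exp (r * (t - t₀)) / (-r) :=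
    intervalIntegral.integral_eq_sub_of_hasDerivAt (fun τ _ => hF τ)
      (hcont.intervalIntegrable _ _)
  rw [hint]
  have h0 : Real.exp (r * (t - t)) = 1 := by simp
  rw [h0]
  have hpos : 0 < -r := by linarith
  have : 0 ≤ Real.exp (r * (t - t₀)) / (-r) :=
    div_nonneg (Real.exp_nonneg _) hpos.le
  linarith

/-- Key quantitative step of the hierarchical PPV theorem: with one Floquet exponent
`μ₀ = 0` and the rest having strictly negative real part, if the residual input `b` is
orthogonal to `v₀` and bounded by `ε`, the Floquet-form response stays bounded for all
`t ≥ t₀` by `ε·B·B'·Σ_{i ≠ 0} 1/(−Re μᵢ)`. -/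
theorem hierarchical_PPV_response_bounded
    (N m : ℕ) (hN : 1 ≤ N) (hm : 0 < m)
    (u v : Fin m → ℝ → EuclideanSpace ℂ (Fin N))
    (hucont : ∀ i : Fin m, Continuous (u i))
    (hvcont : ∀ i : Fin m, Continuous (v i))
    (B B' : ℝ) (hB : 0 ≤ B) (hB' : 0 ≤ B')
    (hubound : ∀ (i : Fin m) (t : ℝ), ‖u i t‖ ≤ B)
    (hvbound : ∀ (i : Fin m) (t : ℝ), ‖v i t‖ ≤ B')
    (μ : Fin m → ℂ)
    (hμ0 : μ ⟨0, hm⟩ = 0)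
    (hμneg : ∀ i : Fin m, i ≠ ⟨0, hm⟩ → (μ i).re < 0)
    (b : ℝ → EuclideanSpace ℂ (Fin N)) (hbcont : Continuous b)
    (ε : ℝ) (hε : 0 ≤ ε)
    (hbbound : ∀ τ : ℝ, ‖b τ‖ ≤ ε)
    (horth : ∀ τ : ℝ, (inner ℂ (v ⟨0, hm⟩ τ) (b τ) : ℂ) = 0)
    (t₀ : ℝ) :
    ∀ t : ℝ, t₀ ≤ t →
      ‖∑ i : Fin m,
          (∫ τ in t₀..t, Complex.exp (μ i * (t - τ)) * (inner ℂ (v i τ) (b τ) : ℂ)) •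
            u i t‖ ≤
        ε * B * B' * ∑ i ∈ Finset.univ.filter (· ≠ (⟨0, hm⟩ : Fin m)),
          1 / (-(μ i).re) := by
  intro t ht
  set i0 : Fin m := ⟨0, hm⟩ with hi0
  set f : Fin m → ℝ := fun i =>
    ‖(∫ τ in t₀..t, Complex.exp (μ i * (t - τ)) * (inner ℂ (v i τ) (b τ) : ℂ)) • u i t‖
    with hf
  have hstep1 : ‖∑ i : Fin m,
      (∫ τ in t₀..t, Complex.exp (μ i * (t - τ)) * (inner ℂ (v i τ) (b τ) : ℂ)) •
        u i t‖ ≤ ∑ i : Fin m, f i := norm_sum_le _ _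
  have hzero : f i0 = 0 := by
    simp only [hf]
    have : (fun τ : ℝ => Complex.exp (μ i0 * (t - τ)) * (inner ℂ (v i0 τ) (b τ) : ℂ))
        = fun _ => 0 := by
      funext τ; rw [horth τ, mul_zero]
    rw [this]
    simp
  have hsum_eq : ∑ i : Fin m, f i
      = ∑ i ∈ Finset.univ.filter (· ≠ i0), f i := by
    symm
    apply Finset.sum_filter_of_ne
    intro x _ hx
    intro hxe
    exact hx (hxe ▸ hzero)
  -- bound each term with i ≠ i0
  have hterm : ∀ i ∈ Finset.univ.filter (· ≠ i0),
      f i ≤ ε * B * B' * (1 / (-(μ i).re)) := by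
    intro i hi
    have hine : i ≠ i0 := (Finset.mem_filter.mp hi).2
    have hr : (μ i).re < 0 := hμneg i hine
    have hrpos : 0 < -(μ i).re := by linarith
    have hcont1 : Continuous fun τ : ℝ =>
        ‖Complex.exp (μ i * (t - τ)) * (inner ℂ (v i τ) (b τ) : ℂ)‖ := by
      apply Continuous.norm
      exact (Complex.continuous_exp.comp (continuous_const.mul
        (continuous_const.sub Complex.continuous_ofReal))).mul
        ((hvcont i).inner hbcont)
    have hcont2 : Continuous fun τ : ℝ =>
        Real.exp ((μ i).re * (t - τ)) * (B' * ε) :=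
      (Real.continuous_exp.comp (continuous_const.mul
        (continuous_const.sub continuous_id))).mul continuous_const
    have hnorm_int : ‖∫ τ in t₀..t,
        Complex.exp (μ i * (t - τ)) * (inner ℂ (v i τ) (b τ) : ℂ)‖
        ≤ ∫ τ in t₀..t,
          ‖Complex.exp (μ i * (t - τ)) * (inner ℂ (v i τ) (b τ) : ℂ)‖ :=
      intervalIntegral.norm_integral_le_integral_norm ht
    have hptwise : ∀ τ ∈ Set.Icc t₀ t,
        ‖Complex.exp (μ i * (t - τ)) * (inner ℂ (v i τ) (b τ) : ℂ)‖
          ≤ Real.exp ((μ i).re * (t - τ)) * (B' * ε) := by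
      intro τ _
      rw [norm_mul]
      have h1 : ‖Complex.exp (μ i * (t - τ))‖ = Real.exp ((μ i).re * (t - τ)) := by
        rw [Complex.norm_exp]
        congr 1
        simp [Complex.mul_re, Complex.sub_re, Complex.sub_im, Complex.ofReal_re,
          Complex.ofReal_im]
      rw [h1]
      apply mul_le_mul_of_nonneg_left _ (Real.exp_nonneg _)
      calc ‖(inner ℂ (v i τ) (b τ) : ℂ)‖ ≤ ‖v i τ‖ * ‖b τ‖ := norm_inner_le_norm _ _
        _ ≤ B' * ε := mul_le_mul (hvbound i τ) (hbbound τ) (norm_nonneg _) hB'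
    have hmono : ∫ τ in t₀..t,
        ‖Complex.exp (μ i * (t - τ)) * (inner ℂ (v i τ) (b τ) : ℂ)‖
        ≤ ∫ τ in t₀..t, Real.exp ((μ i).re * (t - τ)) * (B' * ε) := by
      apply intervalIntegral.integral_mono_on ht
        (hcont1.intervalIntegrable _ _) (hcont2.intervalIntegrable _ _) hptwise
    have hexp : ∫ τ in t₀..t, Real.exp ((μ i).re * (t - τ)) * (B' * ε)
        = (∫ τ in t₀..t, Real.exp ((μ i).re * (t - τ))) * (B' * ε) := by
      rw [intervalIntegral.integral_mul_const]
    have hexp2 : (∫ τ in t₀..t, Real.exp ((μ i).re * (t - τ))) ≤ 1 / (-(μ i).re) :=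
      exp_int_bound _ hr _ _ ht
    have hintbound : ‖∫ τ in t₀..t,
        Complex.exp (μ i * (t - τ)) * (inner ℂ (v i τ) (b τ) : ℂ)‖
        ≤ (1 / (-(μ i).re)) * (B' * ε) := by
      calc _ ≤ _ := hnorm_int
        _ ≤ _ := hmono
        _ = (∫ τ in t₀..t, Real.exp ((μ i).re * (t - τ))) * (B' * ε) := hexp
        _ ≤ (1 / (-(μ i).re)) * (B' * ε) := by
            apply mul_le_mul_of_nonneg_right hexp2
            positivity
    have : f i ≤ ((1 / (-(μ i).re)) * (B' * ε)) * B := by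
      rw [hf]
      simp only [norm_smul]
      apply mul_le_mul hintbound (hubound i t) (norm_nonneg _)
      positivity
    calc f i ≤ ((1 / (-(μ i).re)) * (B' * ε)) * B := this
      _ = ε * B * B' * (1 / (-(μ i).re)) := by ring
  calc ‖∑ i : Fin m,
      (∫ τ in t₀..t, Complex.exp (μ i * (t - τ)) * (inner ℂ (v i τ) (b τ) : ℂ)) •
        u i t‖ ≤ ∑ i : Fin m, f i := hstep1
    _ = ∑ i ∈ Finset.univ.filter (· ≠ i0), f i := hsum_eq
    _ ≤ ∑ i ∈ Finset.univ.filter (· ≠ i0), ε * B * B' * (1 / (-(μ i).re)) :=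
        Finset.sum_le_sum hterm
    _ = ε * B * B' * ∑ i ∈ Finset.univ.filter (· ≠ i0), 1 / (-(μ i).re) := by
        rw [Finset.mul_sum]
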